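/- If a connected (P₂+P₃, C₄, C₆, 5-cap)-free graph G contains an induced 5-cycle but no induced 5-apple, and has no pair of comparable vertices, then G is the join of a blowup of C₅ with a complete graph K_p for some p ≥ 0. -/

import Mathlib

open SimpleGraph

/-- A proper coloring of `G` with colors in `Fin ℓ`. -/
def IsProperColoring {V : Type*} (G : SimpleGraph V) (ℓ : ℕ) (f : V → Fin ℓ) : Prop :=
  ∀ ⦃a b : V⦄, G.Adj a b → f a ≠ f b

/-- A walk in the reconfiguration graph `R_ℓ(G)`: a sequence `c 0, c 1, …, c m` of proper
`ℓ`-colorings of `G` in which consecutive colorings differ on at most one vertex. -/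
def IsRecolorSeq {V : Type*} (G : SimpleGraph V) (ℓ m : ℕ) (c : ℕ → V → Fin ℓ) : Prop :=
  (∀ i ≤ m, IsProperColoring G ℓ (c i)) ∧
    ∀ i < m, ∀ a b : V, a ≠ b → c i a ≠ c (i + 1) a → c i b = c (i + 1) b

/-- The number of times the vertex `a` is recolored along the sequence `c 0, …, c m`. -/
def recolorCount {V : Type*} {ℓ : ℕ} (m : ℕ) (c : ℕ → V → Fin ℓ) (a : V) : ℕ :=
  ((Finset.range m).filter fun i => c i a ≠ c (i + 1) a).card

/-- The cycle `Cₙ` on `Fin n` (for `n ≥ 3`). -/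
def cyc (n : ℕ) [NeZero n] : SimpleGraph (Fin n) := SimpleGraph.fromRel fun a b => a + 1 = b

/-- The graph `P₂ + P₃`, the disjoint union of an edge and a path on three vertices. -/
def p2p3 : SimpleGraph (Fin 5) := SimpleGraph.fromRel fun a b =>
  (a = 0 ∧ b = 1) ∨ (a = 2 ∧ b = 3) ∨ (a = 3 ∧ b = 4)

/-- The 5-cap: a 5-cycle `0,1,2,3,4` plus the vertex `5` adjacent to exactly `0` and `1`. -/
def cap5 : SimpleGraph (Fin 6) := SimpleGraph.fromRel fun a b =>
  (a.val < 5 ∧ b.val < 5 ∧ (a.val + 1) % 5 = b.val) ∨ (a = 5 ∧ (b = 0 ∨ b = 1))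

/-- The 5-apple: a 5-cycle `0,1,2,3,4` plus the vertex `5` adjacent to exactly `0`. -/
def apple5 : SimpleGraph (Fin 6) := SimpleGraph.fromRel fun a b =>
  (a.val < 5 ∧ b.val < 5 ∧ (a.val + 1) % 5 = b.val) ∨ (a = 5 ∧ b = 0)

section Stmt3Aux

instance stmt3DecCyc {n : ℕ} [NeZero n] : DecidableRel (cyc n).Adj :=
  fun a b => decidable_of_iff _ (SimpleGraph.fromRel_adj _ a b).symm
instance stmt3DecP : DecidableRel p2p3.Adj :=
  fun a b => decidable_of_iff _ (SimpleGraph.fromRel_adj _ a b).symm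
instance stmt3DecCap : DecidableRel cap5.Adj :=
  fun a b => decidable_of_iff _ (SimpleGraph.fromRel_adj _ a b).symm
instance stmt3DecApple : DecidableRel apple5.Adj :=
  fun a b => decidable_of_iff _ (SimpleGraph.fromRel_adj _ a b).symm

private def stmt3F4 {V : Type*} (a b c d : V) : Fin 4 → V
  | 0 => a | 1 => b | 2 => c | 3 => d
private def stmt3F5 {V : Type*} (a b c d e : V) : Fin 5 → V
  | 0 => a | 1 => b | 2 => c | 3 => d | 4 => e
private def stmt3F6 {V : Type*} (a b c d e f : V) : Fin 6 → V
  | 0 => a | 1 => b | 2 => c | 3 => d | 4 => e | 5 => f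

lemma embC4 {V : Type*} {G : SimpleGraph V} {a b c d : V}
    (hab : G.Adj a b) (hbc : G.Adj b c) (hcd : G.Adj c d) (hda : G.Adj d a)
    (hac : ¬ G.Adj a c) (hbd : ¬ G.Adj b d) (nac : a ≠ c) (nbd : b ≠ d) :
    Nonempty (cyc 4 ↪g G) := by
  have hca : ¬ G.Adj c a := fun h => hac h.symm
  have hdb : ¬ G.Adj d b := fun h => hbd h.symm
  have uab := hab.symm; have ubc := hbc.symm; have ucd := hcd.symm; have uda := hda.symm
  have nba := hab.ne'; have ncb := hbc.ne'; have ndc := hcd.ne'; have nad := hda.ne'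
  have nab := hab.ne; have nbc := hbc.ne; have ncd := hcd.ne; have nda := hda.ne
  have nca := nac.symm; have ndb := nbd.symm
  refine ⟨⟨⟨stmt3F4 a b c d, ?_⟩, ?_⟩⟩
  · intro i j hij
    fin_cases i <;> fin_cases j <;>
      first
      | rfl
      | (simp only [stmt3F4] at hij; exact absurd hij (by assumption))
  · intro i j
    fin_cases i <;> fin_cases j <;> simp only [stmt3F4] <;>
      first
      | exact iff_of_false G.irrefl (by decide)
      | exact iff_of_true (by assumption) (by decide)
      | exact iff_of_false (by assumption) (by decide)

lemma embP2P3 {V : Type*} {G : SimpleGraph V} {a b c d e : V}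
    (hab : G.Adj a b) (hcd : G.Adj c d) (hde : G.Adj d e)
    (nac : ¬ G.Adj a c) (nad : ¬ G.Adj a d) (nae : ¬ G.Adj a e)
    (nbc : ¬ G.Adj b c) (nbd : ¬ G.Adj b d) (nbe : ¬ G.Adj b e)
    (nce : ¬ G.Adj c e)
    (dac : a ≠ c) (dad : a ≠ d) (dae : a ≠ e)
    (dbc : b ≠ c) (dbd : b ≠ d) (dbe : b ≠ e) (dce : c ≠ e) :
    Nonempty (p2p3 ↪g G) := by
  have sac : ¬ G.Adj c a := fun h => nac h.symm
  have sad : ¬ G.Adj d a := fun h => nad h.symm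
  have sae : ¬ G.Adj e a := fun h => nae h.symm
  have sbc : ¬ G.Adj c b := fun h => nbc h.symm
  have sbd : ¬ G.Adj d b := fun h => nbd h.symm
  have sbe : ¬ G.Adj e b := fun h => nbe h.symm
  have sce : ¬ G.Adj e c := fun h => nce h.symm
  have uab := hab.symm; have ucd := hcd.symm; have ude := hde.symm
  have dab := hab.ne; have dcd := hcd.ne; have dde := hde.ne
  have rab := hab.ne'; have rcd := hcd.ne'; have rde := hde.ne'
  have rac := dac.symm; have rad := dad.symm; have rae := dae.symm
  have rbc := dbc.symm; have rbd := dbd.symm; have rbe := dbe.symm; have rce := dce.symm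
  refine ⟨⟨⟨stmt3F5 a b c d e, ?_⟩, ?_⟩⟩
  · intro i j hij
    fin_cases i <;> fin_cases j <;>
      first
      | rfl
      | (simp only [stmt3F5] at hij; exact absurd hij (by assumption))
  · intro i j
    fin_cases i <;> fin_cases j <;> simp only [stmt3F5] <;>
      first
      | exact iff_of_false G.irrefl (by decide)
      | exact iff_of_true (by assumption) (by decide)
      | exact iff_of_false (by assumption) (by decide)

set_option maxHeartbeats 2000000 in
lemma embCap5 {V : Type*} {G : SimpleGraph V} {c0 c1 c2 c3 c4 t : V}
    (e01 : G.Adj c0 c1) (e12 : G.Adj c1 c2) (e23 : G.Adj c2 c3) (e34 : G.Adj c3 c4)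
    (e40 : G.Adj c4 c0) (t0 : G.Adj t c0) (t1 : G.Adj t c1)
    (n02 : ¬ G.Adj c0 c2) (n13 : ¬ G.Adj c1 c3) (n24 : ¬ G.Adj c2 c4)
    (n03 : ¬ G.Adj c0 c3) (n14 : ¬ G.Adj c1 c4)
    (nt2 : ¬ G.Adj t c2) (nt3 : ¬ G.Adj t c3) (nt4 : ¬ G.Adj t c4)
    (d02 : c0 ≠ c2) (d13 : c1 ≠ c3) (d24 : c2 ≠ c4) (d03 : c0 ≠ c3) (d14 : c1 ≠ c4)
    (dt2 : t ≠ c2) (dt3 : t ≠ c3) (dt4 : t ≠ c4) :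
    Nonempty (cap5 ↪g G) := by
  have s02 : ¬ G.Adj c2 c0 := fun h => n02 h.symm
  have s13 : ¬ G.Adj c3 c1 := fun h => n13 h.symm
  have s24 : ¬ G.Adj c4 c2 := fun h => n24 h.symm
  have s03 : ¬ G.Adj c3 c0 := fun h => n03 h.symm
  have s14 : ¬ G.Adj c4 c1 := fun h => n14 h.symm
  have st2 : ¬ G.Adj c2 t := fun h => nt2 h.symm
  have st3 : ¬ G.Adj c3 t := fun h => nt3 h.symm
  have st4 : ¬ G.Adj c4 t := fun h => nt4 h.symm
  have u01 := e01.symm; have u12 := e12.symm; have u23 := e23.symm; have u34 := e34.symm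
  have u40 := e40.symm; have ut0 := t0.symm; have ut1 := t1.symm
  have d01 := e01.ne; have d12 := e12.ne; have d23 := e23.ne; have d34 := e34.ne
  have d40 := e40.ne; have dt0 := t0.ne; have dt1 := t1.ne
  have r01 := e01.ne'; have r12 := e12.ne'; have r23 := e23.ne'; have r34 := e34.ne'
  have r40 := e40.ne'; have rt0 := t0.ne'; have rt1 := t1.ne'
  have r02 := d02.symm; have r13 := d13.symm; have r24 := d24.symm
  have r03 := d03.symm; have r14 := d14.symm
  have rx2 := dt2.symm; have rx3 := dt3.symm; have rx4 := dt4.symm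
  refine ⟨⟨⟨stmt3F6 c0 c1 c2 c3 c4 t, ?_⟩, ?_⟩⟩
  · intro i j hij
    fin_cases i <;> fin_cases j <;>
      first
      | rfl
      | (simp only [stmt3F6] at hij; exact absurd hij (by assumption))
  · intro i j
    fin_cases i <;> fin_cases j <;> simp only [stmt3F6] <;>
      first
      | exact iff_of_false G.irrefl (by decide)
      | exact iff_of_true (by assumption) (by decide)
      | exact iff_of_false (by assumption) (by decide)

set_option maxHeartbeats 2000000 in
lemma embApple5 {V : Type*} {G : SimpleGraph V} {c0 c1 c2 c3 c4 t : V}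
    (e01 : G.Adj c0 c1) (e12 : G.Adj c1 c2) (e23 : G.Adj c2 c3) (e34 : G.Adj c3 c4)
    (e40 : G.Adj c4 c0) (t0 : G.Adj t c0)
    (n02 : ¬ G.Adj c0 c2) (n13 : ¬ G.Adj c1 c3) (n24 : ¬ G.Adj c2 c4)
    (n03 : ¬ G.Adj c0 c3) (n14 : ¬ G.Adj c1 c4)
    (nt1 : ¬ G.Adj t c1) (nt2 : ¬ G.Adj t c2) (nt3 : ¬ G.Adj t c3) (nt4 : ¬ G.Adj t c4)
    (d02 : c0 ≠ c2) (d13 : c1 ≠ c3) (d24 : c2 ≠ c4) (d03 : c0 ≠ c3) (d14 : c1 ≠ c4)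
    (dt1 : t ≠ c1) (dt2 : t ≠ c2) (dt3 : t ≠ c3) (dt4 : t ≠ c4) :
    Nonempty (apple5 ↪g G) := by
  have s02 : ¬ G.Adj c2 c0 := fun h => n02 h.symm
  have s13 : ¬ G.Adj c3 c1 := fun h => n13 h.symm
  have s24 : ¬ G.Adj c4 c2 := fun h => n24 h.symm
  have s03 : ¬ G.Adj c3 c0 := fun h => n03 h.symm
  have s14 : ¬ G.Adj c4 c1 := fun h => n14 h.symm
  have st1 : ¬ G.Adj c1 t := fun h => nt1 h.symm
  have st2 : ¬ G.Adj c2 t := fun h => nt2 h.symm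
  have st3 : ¬ G.Adj c3 t := fun h => nt3 h.symm
  have st4 : ¬ G.Adj c4 t := fun h => nt4 h.symm
  have u01 := e01.symm; have u12 := e12.symm; have u23 := e23.symm; have u34 := e34.symm
  have u40 := e40.symm; have ut0 := t0.symm
  have d01 := e01.ne; have d12 := e12.ne; have d23 := e23.ne; have d34 := e34.ne
  have d40 := e40.ne; have dt0 := t0.ne
  have r01 := e01.ne'; have r12 := e12.ne'; have r23 := e23.ne'; have r34 := e34.ne'
  have r40 := e40.ne'; have rt0 := t0.ne'
  have r02 := d02.symm; have r13 := d13.symm; have r24 := d24.symm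
  have r03 := d03.symm; have r14 := d14.symm
  have rx1 := dt1.symm; have rx2 := dt2.symm; have rx3 := dt3.symm; have rx4 := dt4.symm
  refine ⟨⟨⟨stmt3F6 c0 c1 c2 c3 c4 t, ?_⟩, ?_⟩⟩
  · intro i j hij
    fin_cases i <;> fin_cases j <;>
      first
      | rfl
      | (simp only [stmt3F6] at hij; exact absurd hij (by assumption))
  · intro i j
    fin_cases i <;> fin_cases j <;> simp only [stmt3F6] <;>
      first
      | exact iff_of_false G.irrefl (by decide)
      | exact iff_of_true (by assumption) (by decide)
      | exact iff_of_false (by assumption) (by decide)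

set_option synthInstance.maxHeartbeats 2000000 in
set_option synthInstance.maxSize 2000 in
set_option maxHeartbeats 4000000 in
lemma comb5 : ∀ (n : Fin 5 → Bool),
    (∀ i, n i = true → n (i+2) = true → n (i+1) = true) →
    (∀ i, n i = true → n (i+1) = false → n (i+2) = false → n (i+3) = false →
      n (i+4) = false → False) →
    (∀ i, n i = true → n (i+1) = true → n (i+2) = false → n (i+3) = false →
      n (i+4) = false → False) →
    ((∀ i, n i = false) ∨ (∀ i, n i = true) ∨
      ∃ i, n i = true ∧ n (i+1) = true ∧ n (i+2) = true ∧ n (i+3) = false ∧ n (i+4) = false) := by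
  decide

set_option synthInstance.maxHeartbeats 2000000 in
set_option synthInstance.maxSize 2000 in
set_option maxHeartbeats 4000000 in
lemma comb5b : ∀ (n : Fin 5 → Bool) (i j : Fin 5), i ≠ j →
    n (i+1) = true → n (i+4) = true → n (i+2) = false → n (i+3) = false →
    n (j+1) = true → n (j+4) = true → n (j+2) = false → n (j+3) = false → False := by
  decide

end Stmt3Aux

/-- a connected `(P₂+P₃, C₄, C₆, 5-cap)`-free graph containing an induced
5-cycle but no induced 5-apple, and having no pair of comparable vertices, is the join of a
blowup of `C₅` with a (possibly empty) complete graph. -/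
theorem stmt3 {V : Type*} [Fintype V] (G : SimpleGraph V) (hconn : G.Connected)
    (hP : ¬ Nonempty (p2p3 ↪g G)) (hC4 : ¬ Nonempty (cyc 4 ↪g G))
    (hC6 : ¬ Nonempty (cyc 6 ↪g G)) (hcap : ¬ Nonempty (cap5 ↪g G))
    (happle : ¬ Nonempty (apple5 ↪g G))
    (v : Fin 5 → V) (hv : Function.Injective v)
    (hC : ∀ i j, G.Adj (v i) (v j) ↔ (cyc 5).Adj i j)
    (hcomp : ¬ ∃ x y : V, x ≠ y ∧ ¬ G.Adj x y ∧
      ((∀ w, G.Adj x w → G.Adj y w) ∨ ∀ w, G.Adj y w → G.Adj x w)) :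
    ∃ (Q : Fin 5 → Set V) (K : Set V),
      (∀ i, (Q i).Nonempty) ∧
      (∀ i j, i ≠ j → Disjoint (Q i) (Q j)) ∧
      (∀ i, Disjoint (Q i) K) ∧
      (∀ x, x ∈ K ∨ ∃ i, x ∈ Q i) ∧
      (∀ i, (Q i).Pairwise G.Adj) ∧
      K.Pairwise G.Adj ∧
      (∀ i j, i ≠ j → ∀ x ∈ Q i, ∀ y ∈ Q j, (G.Adj x y ↔ (cyc 5).Adj i j)) ∧
      (∀ x ∈ K, ∀ i, ∀ y ∈ Q i, G.Adj x y) := by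
  classical
  -- basic cycle facts transported through `hC`
  have cA : ∀ {a b : Fin 5}, (cyc 5).Adj a b → G.Adj (v a) (v b) := fun h => (hC _ _).mpr h
  have rot : ∀ (i a b : Fin 5), (cyc 5).Adj (i+a) (i+b) ↔ (cyc 5).Adj a b := by decide
  have rot0 : ∀ (i b : Fin 5), (cyc 5).Adj i (i+b) ↔ (cyc 5).Adj 0 b := by decide
  have Va : ∀ (i : Fin 5) {a b : Fin 5}, (cyc 5).Adj a b → G.Adj (v (i+a)) (v (i+b)) :=
    fun i {a b} h => cA ((rot i _ _).mpr h)
  have Vn : ∀ (i : Fin 5) {a b : Fin 5}, ¬ (cyc 5).Adj a b → ¬ G.Adj (v (i+a)) (v (i+b)) :=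
    fun i {a b} h h' => h ((rot i _ _).mp ((hC _ _).mp h'))
  have A1 : ∀ i, G.Adj (v i) (v (i+1)) := fun i => cA ((rot0 i 1).mpr (by decide))
  have A4 : ∀ i, G.Adj (v i) (v (i+4)) := fun i => cA ((rot0 i 4).mpr (by decide))
  have N2 : ∀ i, ¬ G.Adj (v i) (v (i+2)) :=
    fun i h => (by decide : ¬ (cyc 5).Adj 0 2) ((rot0 i 2).mp ((hC _ _).mp h))
  have N3 : ∀ i, ¬ G.Adj (v i) (v (i+3)) :=
    fun i h => (by decide : ¬ (cyc 5).Adj 0 3) ((rot0 i 3).mp ((hC _ _).mp h))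
  have Adj01 : G.Adj (v 0) (v 1) := cA (by decide)
  have Adj12 : G.Adj (v 1) (v 2) := cA (by decide)
  have N02c : ¬ G.Adj (v 0) (v 2) := fun h => (by decide : ¬ (cyc 5).Adj 0 2) ((hC _ _).mp h)
  have vne : ∀ {a b : Fin 5}, a ≠ b → v a ≠ v b := fun h h' => h (hv h')
  have ine : ∀ (i : Fin 5) {a b : Fin 5}, a ≠ b → v (i+a) ≠ v (i+b) :=
    fun i {a b} h h' => h (add_left_cancel (hv h'))
  have ine0 : ∀ (i : Fin 5) {a : Fin 5}, a ≠ 0 → v (i+a) ≠ v i :=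
    fun i {a} h h' => h (add_eq_left.mp (hv h'))
  have idx : ∀ k : Fin 5, k+1+1 = k+2 ∧ k+1+4 = k ∧ k+1+2 = k+3 ∧ k+1+3 = k+4 ∧
      k+2+1 = k+3 ∧ k+2+4 = k+1 ∧ k+2+2 = k+4 ∧ k+2+3 = k ∧ k+3+2 = k ∧ k+4+1 = k := by decide
  have mkbool : ∀ x : V, ∃ n : Fin 5 → Bool, (∀ i, n i = true ↔ G.Adj x (v i)) ∧
      (∀ i, n i = false ↔ ¬ G.Adj x (v i)) :=
    fun x => ⟨fun i => decide (G.Adj x (v i)), fun i => by simp, fun i => by simp⟩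
  -- classification, allowing the "no neighbour on the cycle" case
  have classify0 : ∀ x : V, (∃ i, x = v i) ∨ (∀ i, ¬ G.Adj x (v i)) ∨ (∀ i, G.Adj x (v i)) ∨
      (∃ i, G.Adj x (v i) ∧ G.Adj x (v (i+1)) ∧ G.Adj x (v (i+2)) ∧
        ¬ G.Adj x (v (i+3)) ∧ ¬ G.Adj x (v (i+4))) := by
    intro x
    by_cases hcyc : ∃ i, x = v i
    · exact Or.inl hcyc
    push_neg at hcyc
    obtain ⟨n, hn, hnf⟩ := mkbool x
    have cl : ∀ i, n i = true → n (i+2) = true → n (i+1) = true := by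
      intro i h0 h2
      rw [hn] at h0 h2 ⊢
      by_contra h1
      exact hC4 (embC4 h0 (A1 i) (Va i (by decide : (cyc 5).Adj 1 2)) h2.symm h1 (N2 i)
        (hcyc (i+1)) (ine0 i (by decide : (2:Fin 5) ≠ 0)).symm)
    have hsing : ∀ i, n i = true → n (i+1) = false → n (i+2) = false → n (i+3) = false →
        n (i+4) = false → False := by
      intro i h0 h1 h2 h3 h4
      rw [hn] at h0; rw [hnf] at h1 h2 h3 h4
      exact happle (embApple5 (A1 i) (Va i (by decide : (cyc 5).Adj 1 2))
        (Va i (by decide : (cyc 5).Adj 2 3)) (Va i (by decide : (cyc 5).Adj 3 4))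
        (A4 i).symm h0
        (N2 i) (Vn i (by decide : ¬ (cyc 5).Adj 1 3)) (Vn i (by decide : ¬ (cyc 5).Adj 2 4))
        (N3 i) (Vn i (by decide : ¬ (cyc 5).Adj 1 4))
        h1 h2 h3 h4
        (ine0 i (by decide : (2:Fin 5) ≠ 0)).symm (ine i (by decide : (1:Fin 5) ≠ 3))
        (ine i (by decide : (2:Fin 5) ≠ 4)) (ine0 i (by decide : (3:Fin 5) ≠ 0)).symm
        (ine i (by decide : (1:Fin 5) ≠ 4))
        (hcyc (i+1)) (hcyc (i+2)) (hcyc (i+3)) (hcyc (i+4)))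
    have hpair : ∀ i, n i = true → n (i+1) = true → n (i+2) = false → n (i+3) = false →
        n (i+4) = false → False := by
      intro i h0 h1 h2 h3 h4
      rw [hn] at h0 h1; rw [hnf] at h2 h3 h4
      exact hcap (embCap5 (A1 i) (Va i (by decide : (cyc 5).Adj 1 2))
        (Va i (by decide : (cyc 5).Adj 2 3)) (Va i (by decide : (cyc 5).Adj 3 4))
        (A4 i).symm h0 h1
        (N2 i) (Vn i (by decide : ¬ (cyc 5).Adj 1 3)) (Vn i (by decide : ¬ (cyc 5).Adj 2 4))
        (N3 i) (Vn i (by decide : ¬ (cyc 5).Adj 1 4))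
        h2 h3 h4
        (ine0 i (by decide : (2:Fin 5) ≠ 0)).symm (ine i (by decide : (1:Fin 5) ≠ 3))
        (ine i (by decide : (2:Fin 5) ≠ 4)) (ine0 i (by decide : (3:Fin 5) ≠ 0)).symm
        (ine i (by decide : (1:Fin 5) ≠ 4))
        (hcyc (i+2)) (hcyc (i+3)) (hcyc (i+4)))
    rcases comb5 n cl hsing hpair with h | h | ⟨i, h0, h1, h2, h3, h4⟩
    · exact Or.inr (Or.inl (fun i => (hnf i).mp (h i)))
    · exact Or.inr (Or.inr (Or.inl (fun i => (hn i).mp (h i))))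
    · exact Or.inr (Or.inr (Or.inr ⟨i, (hn _).mp h0, (hn _).mp h1, (hn _).mp h2,
        (hnf _).mp h3, (hnf _).mp h4⟩))
  -- full classification: no vertex misses the cycle entirely
  have classify : ∀ x : V, (∃ i, x = v i) ∨ (∀ i, G.Adj x (v i)) ∨
      (∃ i, G.Adj x (v i) ∧ G.Adj x (v (i+1)) ∧ G.Adj x (v (i+2)) ∧
        ¬ G.Adj x (v (i+3)) ∧ ¬ G.Adj x (v (i+4))) := by
    intro x
    rcases classify0 x with h | hW | h | h
    · exact Or.inl h
    · exfalso
      have hxn : ∀ k, x ≠ v k := fun k h' => hW (k+1) (by rw [h']; exact A1 k)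
      apply hcomp
      refine ⟨x, v 0, hxn 0, hW 0, Or.inl ?_⟩
      intro w hw
      rcases classify0 w with ⟨i, rfl⟩ | hWw | hfull | ⟨j, g0, g1, g2, g3, g4⟩
      · exact absurd hw (hW i)
      · exfalso
        have hwn : ∀ k, w ≠ v k := fun k h' => hWw (k+1) (by rw [h']; exact A1 k)
        exact hP (embP2P3 hw Adj01 Adj12 (hW 0) (hW 1) (hW 2) (hWw 0) (hWw 1) (hWw 2) N02c
          (hxn 0) (hxn 1) (hxn 2) (hwn 0) (hwn 1) (hwn 2) (vne (by decide : (0:Fin 5) ≠ 2)))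
      · exact (hfull 0).symm
      · exfalso
        have hwn2 : w ≠ v (j+3) := fun h' => g4 (by rw [h']; exact Va j (by decide : (cyc 5).Adj 3 4))
        have hwn3 : w ≠ v (j+4) :=
          fun h' => g3 (by rw [h']; exact (Va j (by decide : (cyc 5).Adj 3 4)).symm)
        exact happle (embApple5 g2 (Va j (by decide : (cyc 5).Adj 2 3))
          (Va j (by decide : (cyc 5).Adj 3 4)) (A4 j).symm g0.symm hw
          g3 (Vn j (by decide : ¬ (cyc 5).Adj 2 4)) (fun h => N3 j h.symm) g4
          (fun h => N2 j h.symm)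
          (hW (j+2)) (hW (j+3)) (hW (j+4)) (hW j)
          hwn2 (ine j (by decide : (2:Fin 5) ≠ 4)) (ine0 j (by decide : (3:Fin 5) ≠ 0)) hwn3
          (ine0 j (by decide : (2:Fin 5) ≠ 0))
          (hxn (j+2)) (hxn (j+3)) (hxn (j+4)) (hxn j))
    · exact Or.inr (Or.inl h)
    · exact Or.inr (Or.inr h)
  have xne2 : ∀ (i : Fin 5) (x : V), ¬ G.Adj x (v (i+2)) → ¬ G.Adj x (v (i+3)) →
      x ≠ v (i+2) ∧ x ≠ v (i+3) := by
    intro i x x2 x3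
    constructor
    · intro h'; exact x3 (by rw [h']; exact Va i (by decide : (cyc 5).Adj 2 3))
    · intro h'; exact x2 (by rw [h']; exact (Va i (by decide : (cyc 5).Adj 2 3)).symm)
  have adjQ : ∀ (i : Fin 5) (x y : V),
      (x = v i ∨ G.Adj x (v i)) → G.Adj x (v (i+1)) → G.Adj x (v (i+4)) →
      ¬ G.Adj x (v (i+2)) → ¬ G.Adj x (v (i+3)) →
      (y = v (i+1) ∨ G.Adj y (v (i+1))) → G.Adj y (v (i+1+1)) → G.Adj y (v (i+1+4)) →
      ¬ G.Adj y (v (i+1+2)) → ¬ G.Adj y (v (i+1+3)) → G.Adj x y := by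
    intro i x y x0 x1 x4 x2 x3 y0 y1 y4 y2 y3
    rw [(idx i).1] at y1
    rw [(idx i).2.1] at y4
    rw [(idx i).2.2.1] at y2
    rw [(idx i).2.2.2.1] at y3
    rcases y0 with rfl | y0
    · exact x1
    by_contra hn
    have hyx : y ≠ x := fun h' => x2 (by rw [← h']; exact y1)
    have d24 : v (i+3) ≠ x := ((xne2 i x x2 x3).2).symm
    have d14 : v (i+2) ≠ x := ((xne2 i x x2 x3).1).symm
    have dt2 : y ≠ v (i+3) :=
      fun h' => y3 (by rw [h']; exact Va i (by decide : (cyc 5).Adj 3 4))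
    have dt3 : y ≠ v (i+4) :=
      fun h' => y2 (by rw [h']; exact (Va i (by decide : (cyc 5).Adj 3 4)).symm)
    exact hcap (embCap5 (Va i (by decide : (cyc 5).Adj 1 2)) (Va i (by decide : (cyc 5).Adj 2 3))
      (Va i (by decide : (cyc 5).Adj 3 4)) x4.symm x1 y0 y1
      (Vn i (by decide : ¬ (cyc 5).Adj 1 3)) (Vn i (by decide : ¬ (cyc 5).Adj 2 4))
      (fun h => x3 h.symm) (Vn i (by decide : ¬ (cyc 5).Adj 1 4)) (fun h => x2 h.symm)
      y2 y3 (fun h => hn h.symm)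
      (ine i (by decide : (1:Fin 5) ≠ 3)) (ine i (by decide : (2:Fin 5) ≠ 4)) d24
      (ine i (by decide : (1:Fin 5) ≠ 4)) d14 dt2 dt3 hyx)
  have nadjQ : ∀ (i : Fin 5) (x y : V),
      (x = v i ∨ G.Adj x (v i)) → G.Adj x (v (i+1)) → G.Adj x (v (i+4)) →
      ¬ G.Adj x (v (i+2)) → ¬ G.Adj x (v (i+3)) →
      (y = v (i+2) ∨ G.Adj y (v (i+2))) → G.Adj y (v (i+2+1)) → G.Adj y (v (i+2+4)) →
      ¬ G.Adj y (v (i+2+2)) → ¬ G.Adj y (v (i+2+3)) → G.Adj x y → False := by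
    intro i x y x0 x1 x4 x2 x3 y0 y1 y4 y2 y3 hxy
    rw [(idx i).2.2.2.2.1] at y1
    rw [(idx i).2.2.2.2.2.1] at y4
    rw [(idx i).2.2.2.2.2.2.1] at y2
    have nac : x ≠ v (i+3) := (xne2 i x x2 x3).2
    have nbd : y ≠ v (i+4) :=
      fun h' => Vn i (by decide : ¬ (cyc 5).Adj 4 1) (by rw [← h']; exact y4)
    exact hC4 (embC4 hxy y1 (Va i (by decide : (cyc 5).Adj 3 4)) x4.symm x3 y2 nac nbd)
  have hvQ : ∀ i : Fin 5, (v i = v i ∨ G.Adj (v i) (v i)) ∧ G.Adj (v i) (v (i+1)) ∧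
      G.Adj (v i) (v (i+4)) ∧ ¬ G.Adj (v i) (v (i+2)) ∧ ¬ G.Adj (v i) (v (i+3)) :=
    fun i => ⟨Or.inl rfl, A1 i, A4 i, N2 i, N3 i⟩
  refine ⟨fun i => {x | (x = v i ∨ G.Adj x (v i)) ∧ G.Adj x (v (i+1)) ∧ G.Adj x (v (i+4)) ∧
      ¬ G.Adj x (v (i+2)) ∧ ¬ G.Adj x (v (i+3))}, {x | ∀ i, G.Adj x (v i)},
    fun i => ⟨v i, hvQ i⟩, ?_, ?_, ?_, ?_, ?_, ?_, ?_⟩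
  · -- disjointness of the Q's
    intro i j hij
    rw [Set.disjoint_left]
    rintro x ⟨_, a1, a4, a2, a3⟩ ⟨_, b1, b4, b2, b3⟩
    obtain ⟨n, hn, hnf⟩ := mkbool x
    exact comb5b n i j hij ((hn _).mpr a1) ((hn _).mpr a4) ((hnf _).mpr a2) ((hnf _).mpr a3)
      ((hn _).mpr b1) ((hn _).mpr b4) ((hnf _).mpr b2) ((hnf _).mpr b3)
  · -- disjointness of Q i and K
    intro i
    rw [Set.disjoint_left]
    rintro x ⟨_, _, _, a2, _⟩ hxK
    exact a2 (hxK (i+2))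
  · -- coverage
    intro x
    rcases classify x with ⟨i, rfl⟩ | hfull | ⟨i, h0, h1, h2, h3, h4⟩
    · exact Or.inr ⟨i, hvQ i⟩
    · exact Or.inl hfull
    · refine Or.inr ⟨i+1, Or.inr h1, ?_, ?_, ?_, ?_⟩
      · rw [(idx i).1]; exact h2
      · rw [(idx i).2.1]; exact h0
      · rw [(idx i).2.2.1]; exact h3
      · rw [(idx i).2.2.2.1]; exact h4
  · -- each Q i is a clique
    intro i x hx y hy hxy
    obtain ⟨_, a1, a4, a2, a3⟩ := hx
    obtain ⟨_, b1, b4, _, _⟩ := hy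
    by_contra hn
    exact hC4 (embC4 a1 b1.symm b4 a4.symm hn (Vn i (by decide : ¬ (cyc 5).Adj 1 4))
      hxy (ine i (by decide : (1:Fin 5) ≠ 4)))
  · -- K is a clique
    intro x hx y hy hxy
    by_contra hn
    exact hC4 (embC4 (hx 0) (hy 0).symm (hy 2) (hx 2).symm hn N02c hxy
      (vne (by decide : (0:Fin 5) ≠ 2)))
  · -- adjacency between parts follows the 5-cycle
    have cases4 : ∀ a b : Fin 5, a ≠ b → b = a + 1 ∨ b = a + 2 ∨ b = a + 3 ∨ b = a + 4 := by
      decide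
    have cadj1 : ∀ a : Fin 5, (cyc 5).Adj a (a+1) := by decide
    have cadj4 : ∀ a : Fin 5, (cyc 5).Adj a (a+4) := by decide
    have cnadj2 : ∀ a : Fin 5, ¬ (cyc 5).Adj a (a+2) := by decide
    have cnadj3 : ∀ a : Fin 5, ¬ (cyc 5).Adj a (a+3) := by decide
    intro i j hij x hx y hy
    obtain ⟨a0, a1, a4, a2, a3⟩ := hx
    obtain ⟨b0, b1, b4, b2, b3⟩ := hy
    rcases cases4 i j hij with rfl | rfl | rfl | rfl
    · exact iff_of_true (adjQ i x y a0 a1 a4 a2 a3 b0 b1 b4 b2 b3) (cadj1 i)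
    · exact iff_of_false (fun h => nadjQ i x y a0 a1 a4 a2 a3 b0 b1 b4 b2 b3 h) (cnadj2 i)
    · -- j = i + 3 : here i = (i+3)+2
      refine iff_of_false (fun h => ?_) (cnadj3 i)
      have e : i + 3 + 2 = i := (idx i).2.2.2.2.2.2.2.2.1
      refine nadjQ (i+3) y x b0 b1 b4 b2 b3 ?_ ?_ ?_ ?_ ?_ h.symm
      · rw [e]; exact a0
      · rw [e]; exact a1
      · rw [e]; exact a4
      · rw [e]; exact a2
      · rw [e]; exact a3
    · -- j = i + 4 : here i = (i+4)+1
      refine iff_of_true ?_ (cadj4 i)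
      have e : i + 4 + 1 = i := (idx i).2.2.2.2.2.2.2.2.2
      refine (adjQ (i+4) y x b0 b1 b4 b2 b3 ?_ ?_ ?_ ?_ ?_).symm
      · rw [e]; exact a0
      · rw [e]; exact a1
      · rw [e]; exact a4
      · rw [e]; exact a2
      · rw [e]; exact a3
  · -- K is complete to each Q i
    intro x hxK i y hy
    obtain ⟨_, b1, b4, b2, _⟩ := hy
    have yne : y ≠ x := fun h' => b2 (by rw [h']; exact hxK (i+2))
    by_contra hn
    exact hC4 (embC4 b1 (hxK (i+1)).symm (hxK (i+4)) b4.symm (fun h => hn h.symm)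
      (Vn i (by decide : ¬ (cyc 5).Adj 1 4)) yne (ine i (by decide : (1:Fin 5) ≠ 4)))
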